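/- Let L be a symmetric positive semidefinite n×n real matrix whose rank is at least n−1. Then the linear map 𝓛(Z) = Z L + L Z maps the space of skew-symmetric n×n real matrices bijectively onto itself, and the bilinear form (Z₁, Z₂) ↦ (1/2) Tr(𝓛(Z₁) Z₂ᵀ) on the space of skew-symmetric n×n real matrices is symmetric and positive definite (an inner product). -/

import Mathlib

open Matrix

namespace CalLProofAux

variable {n : ℕ}

private lemma tpose_eq (L : Matrix (Fin n) (Fin n) ℝ) (hL : L.PosSemidef) : Lᵀ = L := by
  rw [← conjTranspose_eq_transpose_of_trivial]; exact hL.1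

private lemma trace_half (L Z : Matrix (Fin n) (Fin n) ℝ) (hZ : Zᵀ = -Z) :
    (1 / 2) * ((Z * L + L * Z) * Zᵀ).trace = (Z * L * Zᵀ).trace := by
  have h1 : (Z * L * Zᵀ).trace = -(Z * Z * L).trace := by
    rw [hZ, mul_neg, trace_neg, trace_mul_cycle]
  have h2 : (L * Z * Zᵀ).trace = -(Z * Z * L).trace := by
    rw [hZ, mul_neg, trace_neg, trace_mul_cycle, trace_mul_cycle]
  rw [add_mul, trace_add, h1, h2]
  ring

private lemma skew_zero_of_mul_eq_zero (L : Matrix (Fin n) (Fin n) ℝ)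
    (hLt : Lᵀ = L) (hrank : n - 1 ≤ L.rank)
    (Z : Matrix (Fin n) (Fin n) ℝ) (hZ : Zᵀ = -Z) (hZL : Z * L = 0) : Z = 0 := by
  have hLZ : L * Z = 0 := by
    have h := congrArg transpose hZL
    rw [transpose_mul, hLt, hZ, transpose_zero, mul_neg, neg_eq_zero] at h
    exact h
  have hcol : ∀ j, (fun k => Z k j) ∈ LinearMap.ker L.mulVecLin := by
    intro j
    simp only [LinearMap.mem_ker, mulVecLin_apply]
    funext i
    have h := congrFun (congrFun hLZ i) j
    simpa [mulVec, dotProduct, Matrix.mul_apply] using h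
  have hker : Module.finrank ℝ (LinearMap.ker L.mulVecLin) ≤ 1 := by
    have h1 := LinearMap.finrank_range_add_finrank_ker L.mulVecLin
    have h2 : Module.finrank ℝ (Fin n → ℝ) = n := by simp
    have h3 : L.rank = Module.finrank ℝ (LinearMap.range L.mulVecLin) := rfl
    omega
  by_contra hZ0
  obtain ⟨i, j, hij⟩ : ∃ i j, Z i j ≠ 0 := by
    by_contra h
    push_neg at h
    exact hZ0 (Matrix.ext fun i j => by simpa using h i j)
  have hdiag : ∀ k, Z k k = 0 := by
    intro k
    have h := congrFun (congrFun hZ k) k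
    simp only [transpose_apply, Matrix.neg_apply] at h
    linarith
  have hji : Z j i ≠ 0 := by
    have h := congrFun (congrFun hZ i) j
    simp only [transpose_apply, Matrix.neg_apply] at h
    rw [h]
    simpa using hij
  have hvj : (fun k => Z k j) ≠ 0 := fun h => hij (by simpa using congrFun h i)
  have hspan : (ℝ ∙ (fun k => Z k j)) = LinearMap.ker L.mulVecLin := by
    apply Submodule.eq_of_le_of_finrank_le
    · rw [Submodule.span_le, Set.singleton_subset_iff]
      exact hcol j
    · rw [finrank_span_singleton hvj]
      exact hker
  have hmem : (fun k => Z k i) ∈ (ℝ ∙ (fun k => Z k j)) := by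
    rw [hspan]; exact hcol i
  obtain ⟨c, hc⟩ := Submodule.mem_span_singleton.mp hmem
  have hcj := congrFun hc j
  simp only [Pi.smul_apply, smul_eq_mul, hdiag j, mul_zero] at hcj
  exact hji hcj.symm

private lemma pos_part (L : Matrix (Fin n) (Fin n) ℝ) (hL : L.PosSemidef)
    (hrank : n - 1 ≤ L.rank) (Z : Matrix (Fin n) (Fin n) ℝ) (hZ : Zᵀ = -Z) (hZ0 : Z ≠ 0) :
    0 < (1 / 2) * ((Z * L + L * Z) * Zᵀ).trace := by
  rw [trace_half L Z hZ]
  set R := (open scoped MatrixOrder in CFC.sqrt L) with hRdef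
  have hRR : R * R = L := by open scoped MatrixOrder in exact CFC.sqrt_mul_sqrt_self L hL.nonneg
  have hRt : Rᵀ = R := by
    rw [← conjTranspose_eq_transpose_of_trivial]
    open scoped MatrixOrder in exact (CFC.sqrt_nonneg L).posSemidef.1
  set B := Z * R with hB
  have hBne : B ≠ 0 := by
    intro h
    apply hZ0
    apply skew_zero_of_mul_eq_zero L (tpose_eq L hL) hrank Z hZ
    calc Z * L = B * R := by rw [hB, ← hRR, mul_assoc]
      _ = 0 := by rw [h, zero_mul]
  have hfact : Z * L * Zᵀ = B * Bᵀ := by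
    rw [hB, transpose_mul, hRt, ← hRR]
    simp [Matrix.mul_assoc]
  rw [hfact]
  have htr : (B * Bᵀ).trace = ∑ i, ∑ j, B i j ^ 2 := by
    simp [Matrix.trace, Matrix.diag, Matrix.mul_apply, sq]
  rw [htr]
  obtain ⟨i, j, hij⟩ : ∃ i j, B i j ≠ 0 := by
    by_contra h
    push_neg at h
    exact hBne (Matrix.ext fun i j => by simpa using h i j)
  have hipos : 0 < ∑ j', B i j' ^ 2 :=
    Finset.sum_pos' (fun _ _ => sq_nonneg _) ⟨j, Finset.mem_univ j, by positivity⟩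
  have hpos : 0 < ∑ i', ∑ j', B i' j' ^ 2 :=
    Finset.sum_pos' (fun i' _ => Finset.sum_nonneg fun _ _ => sq_nonneg _)
      ⟨i, Finset.mem_univ i, hipos⟩
  linarith

private lemma symm_part (L : Matrix (Fin n) (Fin n) ℝ) (hLt : Lᵀ = L)
    (Z₁ Z₂ : Matrix (Fin n) (Fin n) ℝ) :
    ((Z₁ * L + L * Z₁) * Z₂ᵀ).trace = ((Z₂ * L + L * Z₂) * Z₁ᵀ).trace := by
  have h1 : (Z₁ * L * Z₂ᵀ).trace = (Z₂ * L * Z₁ᵀ).trace := by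
    rw [← trace_transpose (Z₁ * L * Z₂ᵀ), transpose_mul, transpose_mul, transpose_transpose,
      hLt, ← mul_assoc]
  have h2 : (L * Z₁ * Z₂ᵀ).trace = (L * Z₂ * Z₁ᵀ).trace := by
    rw [← trace_transpose (L * Z₁ * Z₂ᵀ), transpose_mul, transpose_mul, transpose_transpose,
      hLt, ← mul_assoc, trace_mul_cycle]
  rw [add_mul, add_mul, trace_add, trace_add, h1, h2]

private lemma skew_pres (L : Matrix (Fin n) (Fin n) ℝ) (hLt : Lᵀ = L)
    (Z : Matrix (Fin n) (Fin n) ℝ) (hZ : Zᵀ = -Z) :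
    (Z * L + L * Z)ᵀ = -(Z * L + L * Z) := by
  rw [transpose_add, transpose_mul, transpose_mul, hZ, hLt]
  simp only [mul_neg, neg_mul]
  abel

end CalLProofAux

open CalLProofAux

/-- For a symmetric positive semidefinite `L` of rank at least `n−1`, the map
`𝓛(Z) = Z L + L Z` is a bijection of the space of skew-symmetric matrices onto itself, and
`(Z₁, Z₂) ↦ (1/2) Tr(𝓛(Z₁) Z₂ᵀ)` is a symmetric positive definite bilinear form on that space. -/
theorem calL_bijective_and_posdef {n : ℕ} (L : Matrix (Fin n) (Fin n) ℝ)
    (hL : L.PosSemidef) (hrank : n - 1 ≤ L.rank) :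
    (∀ Z : Matrix (Fin n) (Fin n) ℝ, Zᵀ = -Z → (Z * L + L * Z)ᵀ = -(Z * L + L * Z)) ∧
    (∀ W : Matrix (Fin n) (Fin n) ℝ, Wᵀ = -W →
      ∃! Z : Matrix (Fin n) (Fin n) ℝ, Zᵀ = -Z ∧ Z * L + L * Z = W) ∧
    (∀ Z₁ Z₂ : Matrix (Fin n) (Fin n) ℝ, Z₁ᵀ = -Z₁ → Z₂ᵀ = -Z₂ →
      (1 / 2) * ((Z₁ * L + L * Z₁) * Z₂ᵀ).trace = (1 / 2) * ((Z₂ * L + L * Z₂) * Z₁ᵀ).trace) ∧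
    (∀ Z : Matrix (Fin n) (Fin n) ℝ, Zᵀ = -Z → Z ≠ 0 →
      0 < (1 / 2) * ((Z * L + L * Z) * Zᵀ).trace) := by
  have hLt : Lᵀ = L := tpose_eq L hL
  refine ⟨fun Z hZ => skew_pres L hLt Z hZ, ?_, fun Z₁ Z₂ h₁ h₂ => by rw [symm_part L hLt],
    fun Z hZ hZ0 => pos_part L hL hrank Z hZ hZ0⟩
  -- bijectivity
  intro W hW
  let S : Submodule ℝ (Matrix (Fin n) (Fin n) ℝ) :=
    { carrier := {Z | Zᵀ = -Z}
      add_mem' := fun {a} {b} ha hb => by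
        simp only [Set.mem_setOf_eq] at *
        rw [transpose_add, ha, hb, neg_add]
      zero_mem' := by simp
      smul_mem' := fun c a ha => by
        simp only [Set.mem_setOf_eq] at *
        rw [transpose_smul, ha, smul_neg] }
  have hmemS : ∀ Z : Matrix (Fin n) (Fin n) ℝ, Z ∈ S ↔ Zᵀ = -Z := fun Z => Iff.rfl
  let f : S →ₗ[ℝ] S :=
    { toFun := fun Z => ⟨Z.1 * L + L * Z.1, skew_pres L hLt Z.1 Z.2⟩
      map_add' := fun a b => by
        apply Subtype.ext
        show ((a.1 + b.1) * L + L * (a.1 + b.1)) = (a.1 * L + L * a.1) + (b.1 * L + L * b.1)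
        noncomm_ring
      map_smul' := fun c a => by
        apply Subtype.ext
        show (c • a.1) * L + L * (c • a.1) = c • (a.1 * L + L * a.1)
        rw [smul_mul_assoc, mul_smul_comm, smul_add] }
  have hinj : Function.Injective f := by
    rw [injective_iff_map_eq_zero f]
    intro a ha
    have hval : a.1 * L + L * a.1 = 0 := congrArg Subtype.val ha
    apply Subtype.ext
    show a.1 = 0
    by_contra h0
    have hp := pos_part L hL hrank a.1 a.2 h0
    rw [hval, zero_mul, trace_zero, mul_zero] at hp
    exact lt_irrefl 0 hp
  have hsurj : Function.Surjective f := LinearMap.injective_iff_surjective.mp hinj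
  obtain ⟨Z, hZeq⟩ := hsurj ⟨W, hW⟩
  refine ⟨Z.1, ⟨Z.2, congrArg Subtype.val hZeq⟩, ?_⟩
  intro Y ⟨hY, hYeq⟩
  have : f ⟨Y, hY⟩ = f Z := by
    apply Subtype.ext
    show Y * L + L * Y = Z.1 * L + L * Z.1
    rw [hYeq]
    exact (congrArg Subtype.val hZeq).symm
  exact congrArg Subtype.val (hinj this)
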